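/- Let v be a vertex of T and let S be the subtree of T consisting of v and all its descendants, written as the disjoint union of its maximal memory intervals. Then for each of these maximal memory intervals, its first vertex in vEB_ε(T) lies on the leftmost branch of S (the path from v obtained by always descending to the leftmost child), and its last vertex in vEB_ε(T) lies on the rightmost branch of S (the path from v obtained by always descending to the rightmost child). -/

import Mathlib

namespace VEB

inductive OTree : Type where
  | node : List OTree → OTree

def OTree.children : OTree → List OTree
  | .node cs => cs

mutual
  def height : OTree → ℕ
    | .node cs => 1 + heightList cs
  def heightList : List OTree → ℕ
    | [] => 0
    | c :: cs => max (height c) (heightList cs)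
end

def subtreeAt? : OTree → List ℕ → Option OTree
  | t, [] => some t
  | t, i :: p =>
    match t.children[i]? with
    | some c => subtreeAt? c p
    | none => none

/-- `p` is (the path of) a vertex of `t`. -/
def IsVertex (t : OTree) (p : List ℕ) : Prop := (subtreeAt? t p).isSome

/-- `p` is a leaf of `t`. -/
def IsLeaf (t : OTree) (p : List ℕ) : Prop := subtreeAt? t p = some (.node [])

/-- All leaves of `t` are at the same depth (the bottom level). -/
def Uniform (t : OTree) : Prop := ∀ p, IsLeaf t p → p.length + 1 = height t

/-- The top `m+1` levels of `t` (the truncation of height `m+1`). -/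
def trunc : ℕ → OTree → OTree
  | 0, _ => .node []
  | m+1, t => .node (t.children.map (trunc m))

/-- Paths of the vertices at depth `m`, in left-to-right order. -/
def levelPaths : ℕ → OTree → List (List ℕ)
  | 0, _ => [[]]
  | m+1, t => ((t.children.zipIdx.map Prod.swap).map fun ic => (levelPaths m ic.2).map (ic.1 :: ·)).flatten

/-- The level at which a tree of height `h` is cut: `max ⌊ε h⌋ 1`. -/
noncomputable def cutLevel (ε : ℝ) (h : ℕ) : ℕ := max ⌊ε * (h : ℝ)⌋₊ 1

/-- The van Emde Boas order of the vertex paths of `t` (with recursion fuel). -/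
noncomputable def vEBAux (ε : ℝ) : ℕ → OTree → List (List ℕ)
  | 0, _ => []
  | fuel+1, t =>
    if height t ≤ 1 then [[]]
    else
      let m := cutLevel ε (height t)
      vEBAux ε fuel (trunc (m - 1) t) ++
        ((levelPaths m t).map fun q =>
          match subtreeAt? t q with
          | some s => (vEBAux ε fuel s).map (q ++ ·)
          | none => []).flatten

/-- The van Emde Boas order `vEB_ε(t)` of the vertex paths of `t`. -/
noncomputable def vEB (ε : ℝ) (t : OTree) : List (List ℕ) := vEBAux ε (height t) t

/-- Position (index) of vertex `p` in the van Emde Boas order. -/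
noncomputable def pos (ε : ℝ) (t : OTree) (p : List ℕ) : ℕ := (vEB ε t).idxOf p

/-- `A` is a set of vertices occupying consecutive positions in `vEB_ε(t)`. -/
def MemInterval (ε : ℝ) (t : OTree) (A : Set (List ℕ)) : Prop :=
  ∃ i n, A = {p | p ∈ ((vEB ε t).drop i).take n}

/-- The vertices of the decomposition `D` of `t`: pairs `(p, k)` of the root path
and the height of a decomposition subtree (with recursion fuel). -/
noncomputable def decompAux (ε : ℝ) : ℕ → OTree → List (List ℕ × ℕ)
  | 0, _ => []
  | fuel+1, t =>
    if height t ≤ 1 then [([], 1)]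
    else
      let m := cutLevel ε (height t)
      ([], height t) ::
        (decompAux ε fuel (trunc (m - 1) t) ++
          ((levelPaths m t).map fun q =>
            match subtreeAt? t q with
            | some s => (decompAux ε fuel s).map fun r => (q ++ r.1, r.2)
            | none => []).flatten)

/-- The vertices of the decomposition `D` of `t`. -/
noncomputable def decompVerts (ε : ℝ) (t : OTree) : List (List ℕ × ℕ) :=
  decompAux ε (height t) t

/-- The children in the decomposition tree `D` of the decomposition vertex `(p, k)`:
the top tree followed by the bottom trees in left-to-right order. -/
noncomputable def dChildren (ε : ℝ) (t : OTree) (p : List ℕ) (k : ℕ) : List (List ℕ × ℕ) :=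
  if k ≤ 1 then []
  else
    match subtreeAt? t p with
    | some s =>
      (p, cutLevel ε k) ::
        (levelPaths (cutLevel ε k) s).map fun q => (p ++ q, k - cutLevel ε k)
    | none => []

/-- The decomposition subtree `(p, k)` contains the vertex `w` of `t`;
equivalently, the leaf `{w}` of `D` lies in the subtree of `D` rooted at `(p, k)`. -/
def DContains (p : List ℕ) (k : ℕ) (w : List ℕ) : Prop :=
  p <+: w ∧ w.length < p.length + k

/-- Vertex `v` is to the left of the branch with leaf `ℓ`. -/
def LeftOfBranch (v ℓ : List ℕ) : Prop := List.Lex (· < ·) v (ℓ.take v.length)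

/-- Vertex `v` is to the right of the branch with leaf `ℓ`. -/
def RightOfBranch (v ℓ : List ℕ) : Prop := List.Lex (· < ·) (ℓ.take v.length) v

/-- Every internal vertex of `t` has at least `a` children. -/
def MinArity (t : OTree) (a : ℕ) : Prop :=
  ∀ p s, subtreeAt? t p = some s → s.children ≠ [] → a ≤ s.children.length

/-- Every internal vertex of `t` has at most `b` children. -/
def MaxArity (t : OTree) (b : ℕ) : Prop :=
  ∀ p s, subtreeAt? t p = some s → s.children.length ≤ b

/-- `w` lies on the leftmost branch descending from `v` (always taking the leftmost child). -/
def OnLeftmostBranch (v w : List ℕ) : Prop :=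
  v <+: w ∧ ∀ n (hn : n < w.length), v.length ≤ n → w.get ⟨n, hn⟩ = 0

/-- `w` lies on the rightmost branch descending from `v` (always taking the rightmost child). -/
def OnRightmostBranch (t : OTree) (v w : List ℕ) : Prop :=
  v <+: w ∧ ∀ n (hn : n < w.length), v.length ≤ n →
    ∀ s, subtreeAt? t (w.take n) = some s → w.get ⟨n, hn⟩ + 1 = s.children.length
theorem zipIdx_swap_mem {α : Type*} {cs : List α} {ic : ℕ × α}
    (h : ic ∈ cs.zipIdx.map Prod.swap) : cs[ic.1]? = some ic.2 := by
  rcases List.mem_map.1 h with ⟨⟨a, i⟩, hm, rfl⟩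
  exact List.mem_zipIdx_iff_getElem?.1 hm

theorem getElem?_zipIdx_swap {α : Type*} {cs : List α} {j : ℕ} :
    (cs.zipIdx.map Prod.swap)[j]? = cs[j]?.map (fun a => (j, a)) := by
  simp [Option.map_map, Function.comp_def]

theorem length_zipIdx_swap {α : Type*} {cs : List α} :
    (cs.zipIdx.map Prod.swap).length = cs.length := by
  simp

theorem getElem_zipIdx_swap {α : Type*} {cs : List α} {i : ℕ}
    (h : i < (cs.zipIdx.map Prod.swap).length) :
    (cs.zipIdx.map Prod.swap)[i] = (i, cs[i]'(by simpa using h)) := by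
  simp

theorem zipIdx_swap_cons {α : Type*} {c : α} {cs : List α} :
    ((c :: cs).zipIdx.map Prod.swap) = (0, c) :: (cs.zipIdx 1).map Prod.swap := rfl

theorem subtreeAt?_append (t : OTree) (p q : List ℕ) :
    subtreeAt? t (p ++ q) = (subtreeAt? t p).bind (fun s => subtreeAt? s q) := by
  induction p generalizing t with
  | nil => simp [subtreeAt?]
  | cons i p ih =>
    simp only [List.cons_append, subtreeAt?]
    cases t.children[i]? with
    | none => simp
    | some c => simp [ih]

theorem height_pos (t : OTree) : 1 ≤ height t := by
  cases t with | node cs => simp [height]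

theorem heightList_le {c : OTree} {cs : List OTree} (h : c ∈ cs) :
    height c ≤ heightList cs := by
  induction cs with
  | nil => simp at h
  | cons d ds ih =>
    rcases List.mem_cons.1 h with rfl | h
    · simp [heightList]
    · exact le_trans (ih h) (by simp [heightList])

theorem heightList_attained {cs : List OTree} (h : cs ≠ []) :
    ∃ c ∈ cs, height c = heightList cs := by
  induction cs with
  | nil => simp at h
  | cons d ds ih =>
    rcases eq_or_ne ds [] with rfl | hne
    · exact ⟨d, by simp, by simp [heightList]⟩
    · rcases ih hne with ⟨c, hc, hcs⟩
      rcases le_total (height d) (heightList ds) with hle | hle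
      · exact ⟨c, List.mem_cons_of_mem _ hc, by simp [heightList, hcs, max_eq_right hle]⟩
      · exact ⟨d, by simp, by simp [heightList, max_eq_left hle]⟩

theorem heightList_eq_of_forall {cs : List OTree} {a : ℕ} (h : cs ≠ [])
    (hall : ∀ c ∈ cs, height c = a) : heightList cs = a := by
  induction cs with
  | nil => simp at h
  | cons d ds ih =>
    rcases eq_or_ne ds [] with rfl | hne
    · simpa [heightList] using hall d (by simp)
    · rw [heightList, hall d (by simp), ih hne (fun c hc => hall c (List.mem_cons_of_mem _ hc))]
      simp

theorem exists_deep_leaf (t : OTree) : ∃ p, IsLeaf t p ∧ p.length + 1 = height t := by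
  generalize hh : height t = h
  induction h using Nat.strong_induction_on generalizing t with
  | h h ih =>
  cases t with | node cs =>
  rcases eq_or_ne cs [] with rfl | hne
  · exact ⟨[], by simp [IsLeaf, subtreeAt?], by simpa [height, heightList] using hh⟩
  · rcases heightList_attained hne with ⟨c, hc, hcs⟩
    rcases List.getElem_of_mem hc with ⟨i, hi, rfl⟩
    have hlt : height cs[i] < h := by
      rw [← hh]; simp only [height, hcs]; omega
    rcases ih _ hlt _ rfl with ⟨p, hp, hlen⟩
    refine ⟨i :: p, ?_, ?_⟩
    · simp only [IsLeaf, subtreeAt?, OTree.children]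
      rw [List.getElem?_eq_getElem hi]
      exact hp
    · simp only [List.length_cons]
      rw [← hh]
      simp only [height, hcs]
      omega

theorem isLeaf_append {t s : OTree} {p q : List ℕ} (hs : subtreeAt? t p = some s) :
    IsLeaf t (p ++ q) ↔ IsLeaf s q := by
  simp [IsLeaf, subtreeAt?_append, hs]

theorem uniform_subtree {t s : OTree} {p : List ℕ} (ht : Uniform t)
    (hs : subtreeAt? t p = some s) : Uniform s ∧ height s + p.length = height t := by
  rcases exists_deep_leaf s with ⟨q, hq, hlen⟩
  have h1 : IsLeaf t (p ++ q) := (isLeaf_append hs).2 hq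
  have h2 := ht _ h1
  simp only [List.length_append] at h2
  constructor
  · intro q' hq'
    have := ht _ ((isLeaf_append hs).2 hq')
    simp only [List.length_append] at this
    omega
  · omega

@[simp] theorem children_node (cs : List OTree) : (OTree.node cs).children = cs := rfl

@[simp] theorem subtreeAt?_nil (t : OTree) : subtreeAt? t [] = some t := rfl

theorem subtreeAt?_cons (t : OTree) (i : ℕ) (p : List ℕ) :
    subtreeAt? t (i :: p) = (t.children[i]?).bind (fun c => subtreeAt? c p) := by
  simp only [subtreeAt?]
  cases t.children[i]? <;> simp

theorem height_node_ne_nil {cs : List OTree} (h : cs ≠ []) : 2 ≤ height (OTree.node cs) := by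
  rcases List.exists_mem_of_ne_nil cs h with ⟨c, hc⟩
  have := heightList_le hc
  have := height_pos c
  simp only [height]; omega

theorem children_ne_nil_of_height {t : OTree} (h : 2 ≤ height t) : t.children ≠ [] := by
  cases t with | node cs =>
  rintro rfl
  simp [height, heightList] at h

theorem uniform_child {cs : List OTree} {c : OTree} (ht : Uniform (OTree.node cs))
    (hc : c ∈ cs) : Uniform c ∧ height c + 1 = height (OTree.node cs) := by
  rcases List.getElem_of_mem hc with ⟨i, hi, rfl⟩
  have hs : subtreeAt? (OTree.node cs) [i] = some cs[i] := by
    simp [subtreeAt?_cons, List.getElem?_eq_getElem hi]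
  simpa using uniform_subtree ht hs

theorem subtreeAt?_trunc {p : List ℕ} {k : ℕ} (t : OTree) (h : p.length ≤ k) :
    subtreeAt? (trunc k t) p = (subtreeAt? t p).map (trunc (k - p.length)) := by
  induction p generalizing k t with
  | nil => simp
  | cons i p ih =>
    cases k with
    | zero => simp at h
    | succ k =>
      simp only [subtreeAt?_cons, trunc, children_node, List.getElem?_map]
      cases hc : t.children[i]? with
      | none => simp
      | some c =>
        simp only [Option.map_some, Option.bind_some, Option.bind_some]
        rw [ih c (by simpa using h)]
        simp only [List.length_cons, Nat.succ_sub_succ]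

theorem trunc_vertex_len {p : List ℕ} {k : ℕ} {t : OTree} {s : OTree}
    (h : subtreeAt? (trunc k t) p = some s) : p.length ≤ k := by
  induction p generalizing k t with
  | nil => simp
  | cons i p ih =>
    cases k with
    | zero =>
      simp only [trunc, subtreeAt?_cons, children_node] at h
      simp at h
    | succ k =>
      simp only [trunc, subtreeAt?_cons, children_node, List.getElem?_map] at h
      cases hc : t.children[i]? with
      | none => simp [hc] at h
      | some c =>
        rw [hc] at h
        simp only [Option.map_some, Option.bind_some] at h
        have := ih (t := c) (k := k) h
        simp only [List.length_cons]
        omega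

theorem height_trunc {t : OTree} {k : ℕ} (ht : Uniform t) (h : k + 1 ≤ height t) :
    height (trunc k t) = k + 1 := by
  induction k generalizing t with
  | zero => simp [trunc, height, heightList]
  | succ k ih =>
    have h2 : 2 ≤ height t := by omega
    have hne := children_ne_nil_of_height h2
    cases t with | node cs =>
    simp only [children_node] at hne
    have hall : ∀ c ∈ cs.map (trunc k), height c = k + 1 := by
      intro c hc
      rcases List.mem_map.1 hc with ⟨c', hc', rfl⟩
      rcases uniform_child ht hc' with ⟨hu, hh⟩
      exact ih hu (by omega)
    have : heightList (cs.map (trunc k)) = k + 1 :=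
      heightList_eq_of_forall (by simpa using hne) hall
    simp only [trunc, children_node, height, this]
    omega

theorem uniform_trunc {t : OTree} {k : ℕ} (ht : Uniform t) (h : k + 1 ≤ height t) :
    Uniform (trunc k t) := by
  intro p hp
  have hlen : p.length ≤ k := trunc_vertex_len hp
  rw [height_trunc ht h]
  rcases Nat.lt_or_ge p.length k with hlt | hge
  · exfalso
    unfold IsLeaf at hp
    rw [subtreeAt?_trunc t hlen] at hp
    rcases Option.map_eq_some_iff.1 hp with ⟨s, hs, hsk⟩
    have : s.children = [] := by
      rcases Nat.exists_eq_add_of_lt hlt with ⟨j, hj⟩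
      have : k - p.length = j + 1 := by omega
      rw [this] at hsk
      cases s with | node ds =>
      simp only [trunc, OTree.node.injEq] at hsk
      simpa using hsk
    have hleaf : IsLeaf t p := by
      unfold IsLeaf
      cases s with | node ds =>
      simp only [children_node] at this
      subst this
      exact hs
    have := ht _ hleaf
    omega
  · omega

/-- `a` and `b` occupy consecutive positions in `L`. -/
def Adj {α : Type*} (L : List α) (a b : α) : Prop :=
  ∃ j, L[j]? = some a ∧ L[j+1]? = some b

theorem Adj_nil {α : Type*} {a b : α} : ¬ Adj ([] : List α) a b := by
  rintro ⟨j, h1, _⟩; simp at h1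

theorem Adj_singleton {α : Type*} {x a b : α} : ¬ Adj [x] a b := by
  rintro ⟨j, h1, h2⟩
  have : j < 1 := by
    by_contra h
    rw [List.getElem?_eq_none (by simpa using Nat.le_of_not_lt h)] at h1
    simp at h1
  interval_cases j
  simp at h2

theorem Adj_cons {α : Type*} {x : α} {L : List α} {a b : α} (h : Adj L a b) :
    Adj (x :: L) a b := by
  rcases h with ⟨j, h1, h2⟩
  exact ⟨j + 1, by simpa using h1, by simpa using h2⟩

theorem Adj_append {α : Type*} {A B : List α} {a b : α} (h : Adj (A ++ B) a b) :
    Adj A a b ∨ Adj B a b ∨ (A.getLast? = some a ∧ B.head? = some b) := by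
  rcases h with ⟨j, h1, h2⟩
  rcases Nat.lt_or_ge (j + 1) A.length with hlt | hge
  · left
    exact ⟨j, by rwa [List.getElem?_append_left (by omega)] at h1,
      by rwa [List.getElem?_append_left hlt] at h2⟩
  rcases Nat.lt_or_ge j A.length with hlt2 | hge2
  · right; right
    have hj : j = A.length - 1 := by omega
    constructor
    · rw [List.getElem?_append_left hlt2] at h1
      rw [List.getLast?_eq_getElem?, ← hj]
      exact h1
    · rw [List.getElem?_append_right hge] at h2
      rw [List.head?_eq_getElem?]
      have : j + 1 - A.length = 0 := by omega
      rwa [this] at h2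
  · right; left
    refine ⟨j - A.length, ?_, ?_⟩
    · rwa [List.getElem?_append_right hge2] at h1
    · rw [List.getElem?_append_right hge] at h2
      have : j + 1 - A.length = j - A.length + 1 := by omega
      rwa [this] at h2

theorem Adj_map {α β : Type*} {f : α → β} {L : List α} {a b : β}
    (h : Adj (L.map f) a b) : ∃ a' b', Adj L a' b' ∧ a = f a' ∧ b = f b' := by
  rcases h with ⟨j, h1, h2⟩
  rw [List.getElem?_map] at h1 h2
  rcases Option.map_eq_some_iff.1 h1 with ⟨a', ha', rfl⟩
  rcases Option.map_eq_some_iff.1 h2 with ⟨b', hb', rfl⟩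
  exact ⟨a', b', ⟨j, ha', hb'⟩, rfl, rfl⟩

theorem Adj_flatten {α : Type*} {l : List (List α)} {a b : α}
    (hne : ∀ B ∈ l, B ≠ []) (h : Adj l.flatten a b) :
    (∃ B ∈ l, Adj B a b) ∨
      (∃ B C, Adj l B C ∧ B.getLast? = some a ∧ C.head? = some b) := by
  induction l with
  | nil => exact absurd (by simpa using h) Adj_nil
  | cons B rest ih =>
    rw [List.flatten_cons] at h
    rcases Adj_append h with hA | hB | ⟨hlast, hhead⟩
    · exact Or.inl ⟨B, by simp, hA⟩
    · rcases ih (fun C hC => hne C (List.mem_cons_of_mem _ hC)) hB with ⟨C, hC, hadj⟩ | ⟨C, D, hadj, h1, h2⟩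
      · exact Or.inl ⟨C, List.mem_cons_of_mem _ hC, hadj⟩
      · exact Or.inr ⟨C, D, Adj_cons hadj, h1, h2⟩
    · cases rest with
      | nil => simp at hhead
      | cons C rest' =>
        have hCne : C ≠ [] := hne C (by simp)
        right
        refine ⟨B, C, ⟨0, by simp, by simp⟩, hlast, ?_⟩
        rw [List.flatten_cons, List.head?_append] at hhead
        rcases List.exists_cons_of_ne_nil hCne with ⟨c0, C', rfl⟩
        simpa using hhead

theorem prefix_replicate {v : List ℕ} {m : ℕ} (h : v <+: List.replicate m 0) :
    ∃ k, List.replicate m 0 = v ++ List.replicate k 0 := by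
  rcases h with ⟨r, hr⟩
  refine ⟨r.length, ?_⟩
  rw [← hr]
  congr 1
  apply List.eq_replicate_of_mem
  intro b hb
  have : b ∈ List.replicate m 0 := by rw [← hr]; exact List.mem_append_right _ hb
  exact List.eq_of_mem_replicate this

theorem lp_mem {m : ℕ} {t : OTree} {q : List ℕ} (h : q ∈ levelPaths m t) :
    q.length = m ∧ ∃ s, subtreeAt? t q = some s := by
  induction m generalizing t q with
  | zero =>
    simp only [levelPaths, List.mem_singleton] at h
    subst h
    exact ⟨rfl, t, rfl⟩
  | succ m ih =>
    simp only [levelPaths, List.mem_flatten, List.mem_map] at h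
    rcases h with ⟨B, ⟨ic, hic, rfl⟩, hq⟩
    rcases List.mem_map.1 hq with ⟨q', hq', rfl⟩
    rcases ih hq' with ⟨hlen, s, hs⟩
    have hget : t.children[ic.1]? = some ic.2 := zipIdx_swap_mem (List.mem_map.2 hic)
    refine ⟨by simp [hlen], s, ?_⟩
    rw [subtreeAt?_cons, hget, Option.bind_some, hs]

theorem lp_head {m : ℕ} {t : OTree} (ht : Uniform t) (h : m + 1 ≤ height t) :
    (levelPaths m t).head? = some (List.replicate m 0) := by
  induction m generalizing t with
  | zero => simp [levelPaths]
  | succ m ih =>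
    have h2 : 2 ≤ height t := by omega
    have hne := children_ne_nil_of_height h2
    cases t with | node cs =>
    simp only [children_node] at hne
    rcases List.exists_cons_of_ne_nil hne with ⟨c, cs', rfl⟩
    rcases uniform_child ht (List.mem_cons_self (a := c) (l := cs')) with ⟨hu, hh⟩
    have ihc := ih hu (by omega)
    simp only [levelPaths, zipIdx_swap_cons, children_node, List.map_cons, List.flatten_cons,
      List.head?_append, List.head?_map, ihc]
    simp [List.replicate_succ]

theorem lp_ne_nil {m : ℕ} {t : OTree} (ht : Uniform t) (h : m + 1 ≤ height t) :
    levelPaths m t ≠ [] := by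
  intro hnil
  have := lp_head ht h
  rw [hnil] at this
  simp at this

/-- `a` follows the rightmost children of `t` at all depths `n` with `v.length ≤ n < a.length`. -/
def RSpec (t : OTree) (v a : List ℕ) : Prop :=
  ∀ n, v.length ≤ n → n < a.length → ∀ s, subtreeAt? t (a.take n) = some s →
    ∃ j, a[n]? = some j ∧ j + 1 = s.children.length

theorem getLast?_flatten {α : Type*} {l : List (List α)} {B : List α}
    (h : l.getLast? = some B) (hB : B ≠ []) : l.flatten.getLast? = B.getLast? := by
  induction l with
  | nil => simp at h
  | cons X rest ih =>
    cases rest with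
    | nil =>
      simp only [List.getLast?_singleton, Option.some.injEq] at h
      subst h
      simp
    | cons Y rest' =>
      rw [List.getLast?_cons_cons] at h
      rw [List.flatten_cons, List.getLast?_append, ih h]
      rcases List.exists_cons_of_ne_nil hB with ⟨b0, B', rfl⟩
      rcases List.getLast?_eq_some_getLast (l := b0 :: B') (by simp) with h'
      simp [h']

theorem lp_getLast {m : ℕ} {t : OTree} (ht : Uniform t) (h : m + 1 ≤ height t) :
    ∃ q, (levelPaths m t).getLast? = some q ∧ q.length = m ∧ RSpec t [] q := by
  induction m generalizing t with
  | zero =>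
    refine ⟨[], by simp [levelPaths], rfl, ?_⟩
    intro n _ hn
    simp at hn
  | succ m ih =>
    have h2 : 2 ≤ height t := by omega
    have hne := children_ne_nil_of_height h2
    cases t with | node cs =>
    simp only [children_node] at hne
    have hN : 0 < cs.length := List.length_pos_iff.2 hne
    set N := cs.length with hNdef
    have hclast : cs[N-1]? = some (cs.getLast hne) := by
      rw [List.getElem?_eq_getElem (by omega)]
      congr 1
      exact (List.getLast_eq_getElem hne).symm
    set c := cs.getLast hne with hcdef
    have hcmem : c ∈ cs := List.getLast_mem hne
    rcases uniform_child ht hcmem with ⟨hu, hh⟩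
    rcases ih hu (by omega) with ⟨r, hr, hrlen, hrspec⟩
    have hlpne : levelPaths m c ≠ [] := lp_ne_nil hu (by omega)
    -- the last block
    have hblocklast : ((cs.zipIdx.map Prod.swap).map fun ic => (levelPaths m ic.2).map (ic.1 :: ·)).getLast?
        = some ((levelPaths m c).map ((N - 1) :: ·)) := by
      rw [List.getLast?_eq_getElem?, List.length_map, List.length_map, List.length_zipIdx]
      rw [List.getElem?_map, getElem?_zipIdx_swap, hclast]
      rfl
    have hflat : (levelPaths (m+1) (OTree.node cs)).getLast?
        = some ((N - 1) :: r) := by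
      show (((OTree.node cs).children.zipIdx.map Prod.swap).map fun ic =>
          (levelPaths m ic.2).map (ic.1 :: ·)).flatten.getLast? = _
      rw [children_node, getLast?_flatten hblocklast (by simpa using hlpne)]
      rw [List.getLast?_map, hr]
      rfl
    refine ⟨(N - 1) :: r, hflat, by simp [hrlen], ?_⟩
    intro n _ hn s hs
    cases n with
    | zero =>
      simp only [List.take_zero, subtreeAt?_nil, Option.some.injEq] at hs
      subst hs
      exact ⟨N - 1, by simp, by simp; omega⟩
    | succ n' =>
      simp only [List.take_succ_cons, subtreeAt?_cons, children_node, hclast,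
        Option.bind_some] at hs
      have := hrspec n' (by simp) (by simp at hn; omega) s hs
      simpa using this

theorem lp_blocks_ne_nil {m : ℕ} {cs : List OTree} (ht : Uniform (OTree.node cs))
    (h : m + 1 + 1 ≤ height (OTree.node cs)) :
    ∀ B ∈ (cs.zipIdx.map Prod.swap).map fun ic => (levelPaths m ic.2).map (ic.1 :: ·), B ≠ [] := by
  intro B hB
  rcases List.mem_map.1 hB with ⟨ic, hic, rfl⟩
  have hget : cs[ic.1]? = some ic.2 := zipIdx_swap_mem hic
  have hmem : ic.2 ∈ cs := List.mem_of_getElem? hget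
  rcases uniform_child ht hmem with ⟨hu, hh⟩
  have := lp_ne_nil hu (m := m) (by omega)
  simpa using this

theorem adj_enum {α : Type*} {cs : List α} {x y : ℕ × α} (h : Adj (cs.zipIdx.map Prod.swap) x y) :
    ∃ j c c', x = (j, c) ∧ y = (j + 1, c') ∧ cs[j]? = some c ∧ cs[j+1]? = some c' := by
  rcases h with ⟨j, h1, h2⟩
  rw [getElem?_zipIdx_swap] at h1 h2
  rcases Option.map_eq_some_iff.1 h1 with ⟨c, hc, rfl⟩
  rcases Option.map_eq_some_iff.1 h2 with ⟨c', hc', rfl⟩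
  exact ⟨j, c, c', rfl, rfl, hc, hc'⟩

theorem lp_adj_left {m : ℕ} {t : OTree} {v q q' : List ℕ} (ht : Uniform t)
    (h : m + 1 ≤ height t) (hadj : Adj (levelPaths m t) q q')
    (hpre : v <+: q') (hnpre : ¬ v <+: q) : ∃ k, q' = v ++ List.replicate k 0 := by
  induction m generalizing t v q q' with
  | zero => exact absurd hadj (by simpa [levelPaths] using Adj_singleton)
  | succ m ih =>
    cases t with | node cs =>
    have hblocks := lp_blocks_ne_nil ht h
    rcases Adj_flatten hblocks hadj with ⟨B, hB, hadjB⟩ | ⟨B, C, hBC, hlast, hhead⟩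
    · rcases List.mem_map.1 hB with ⟨ic, hic, rfl⟩
      rcases Adj_map hadjB with ⟨r, r', hrr, rfl, rfl⟩
      have hget : cs[ic.1]? = some ic.2 := zipIdx_swap_mem hic
      rcases uniform_child ht (List.mem_of_getElem? hget) with ⟨hu, hh⟩
      cases v with
      | nil => exact absurd List.nil_prefix hnpre
      | cons x v' =>
        rcases List.cons_prefix_cons.1 hpre with ⟨rfl, hpre'⟩
        have hnpre' : ¬ v' <+: r := fun hc => hnpre (List.cons_prefix_cons.2 ⟨rfl, hc⟩)
        rcases ih hu (by omega) hrr hpre' hnpre' with ⟨k, hk⟩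
        exact ⟨k, by simp [hk]⟩
    · rcases Adj_map hBC with ⟨ic, ic', hadjE, rfl, rfl⟩
      rcases adj_enum hadjE with ⟨j, c, c', rfl, rfl, hc, hc'⟩
      rcases uniform_child ht (List.mem_of_getElem? hc') with ⟨hu', hh'⟩
      have hheadC : ((levelPaths m c').map ((j+1) :: ·)).head? =
          some ((j+1) :: List.replicate m 0) := by
        rw [List.head?_map, lp_head hu' (by omega)]
        rfl
      rw [hheadC] at hhead
      have hq' : q' = (j+1) :: List.replicate m 0 := by
        simpa using hhead.symm
      subst hq'
      cases v with
      | nil => exact absurd List.nil_prefix hnpre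
      | cons x v' =>
        rcases List.cons_prefix_cons.1 hpre with ⟨rfl, hpre'⟩
        rcases prefix_replicate hpre' with ⟨k, hk⟩
        exact ⟨k, by simp [hk]⟩

theorem lp_adj_right {m : ℕ} {t : OTree} {v q q' : List ℕ} (ht : Uniform t)
    (h : m + 1 ≤ height t) (hadj : Adj (levelPaths m t) q q')
    (hpre : v <+: q) (hnpre : ¬ v <+: q') :
    ∀ n, v.length ≤ n → n < m → ∀ s, subtreeAt? t (q.take n) = some s →
      ∃ j, q[n]? = some j ∧ j + 1 = s.children.length := by
  induction m generalizing t v q q' with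
  | zero => exact absurd hadj (by simpa [levelPaths] using Adj_singleton)
  | succ m ih =>
    cases t with | node cs =>
    have hblocks := lp_blocks_ne_nil ht h
    rcases Adj_flatten hblocks hadj with ⟨B, hB, hadjB⟩ | ⟨B, C, hBC, hlast, hhead⟩
    · rcases List.mem_map.1 hB with ⟨ic, hic, rfl⟩
      rcases Adj_map hadjB with ⟨r, r', hrr, rfl, rfl⟩
      have hget : cs[ic.1]? = some ic.2 := zipIdx_swap_mem hic
      rcases uniform_child ht (List.mem_of_getElem? hget) with ⟨hu, hh⟩
      cases v with
      | nil => exact absurd List.nil_prefix hnpre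
      | cons x v' =>
        rcases List.cons_prefix_cons.1 hpre with ⟨rfl, hpre'⟩
        have hnpre' : ¬ v' <+: r' := fun hc => hnpre (List.cons_prefix_cons.2 ⟨rfl, hc⟩)
        intro n hvn hnm s hs
        cases n with
        | zero => simp at hvn
        | succ n' =>
          simp only [List.take_succ_cons, subtreeAt?_cons, children_node, hget,
            Option.bind_some] at hs
          have := ih hu (by omega) hrr hpre' hnpre' n' (by simpa using hvn)
            (by omega) s hs
          simpa using this
    · rcases Adj_map hBC with ⟨ic, ic', hadjE, rfl, rfl⟩
      rcases adj_enum hadjE with ⟨j, c, c', rfl, rfl, hc, hc'⟩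
      rcases uniform_child ht (List.mem_of_getElem? hc) with ⟨hu, hh⟩
      rcases lp_getLast hu (m := m) (by omega) with ⟨r0, hr0, hr0len, hr0spec⟩
      have hlastB : ((levelPaths m c).map (j :: ·)).getLast? = some (j :: r0) := by
        rw [List.getLast?_map, hr0]; rfl
      rw [hlastB] at hlast
      have hq : q = j :: r0 := by simpa using hlast.symm
      subst hq
      cases v with
      | nil => exact absurd List.nil_prefix hnpre
      | cons x v' =>
        rcases List.cons_prefix_cons.1 hpre with ⟨rfl, hpre'⟩
        intro n hvn hnm s hs
        cases n with
        | zero => simp at hvn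
        | succ n' =>
          simp only [List.take_succ_cons, subtreeAt?_cons, children_node, hc,
            Option.bind_some] at hs
          have := hr0spec n' (by simp) (by omega) s hs
          simpa using this

theorem cutLevel_bounds {ε : ℝ} (hε1 : ε ≤ 1/2) {h : ℕ} (hh : 2 ≤ h) :
    1 ≤ cutLevel ε h ∧ cutLevel ε h + 1 ≤ h := by
  refine ⟨le_max_right _ _, ?_⟩
  have hfloor : ⌊ε * (h : ℝ)⌋₊ ≤ h - 1 := by
    have h1 : ε * (h : ℝ) ≤ ((h - 1 : ℕ) : ℝ) := by
      have hcast : ((h - 1 : ℕ) : ℝ) = (h : ℝ) - 1 := by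
        rw [Nat.cast_sub (by omega)]; norm_num
      have hh2 : (2 : ℝ) ≤ (h : ℝ) := by exact_mod_cast hh
      nlinarith [mul_le_mul_of_nonneg_right hε1 (by positivity : (0:ℝ) ≤ (h:ℝ))]
    calc ⌊ε * (h : ℝ)⌋₊ ≤ ⌊((h - 1 : ℕ) : ℝ)⌋₊ := Nat.floor_le_floor h1
      _ = h - 1 := Nat.floor_natCast _
  have : cutLevel ε h ≤ h - 1 := by
    unfold cutLevel
    exact max_le hfloor (by omega)
  omega

theorem lp_nodup (m : ℕ) (t : OTree) : (levelPaths m t).Nodup := by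
  induction m generalizing t with
  | zero => simp [levelPaths]
  | succ m ih =>
    rw [levelPaths, List.nodup_flatten]
    constructor
    · intro B hB
      rcases List.mem_map.1 hB with ⟨ic, _, rfl⟩
      exact (List.nodup_map_iff (fun x y hxy => by simpa using hxy)).2 (ih ic.2)
    · rw [List.pairwise_map, List.pairwise_iff_getElem]
      intro i j hi hj hij
      rw [getElem_zipIdx_swap, getElem_zipIdx_swap]
      intro x hx hy
      rcases List.mem_map.1 hx with ⟨r, _, rfl⟩
      rcases List.mem_map.1 hy with ⟨r', _, heq⟩
      injection heq.symm with h1 _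
      omega

theorem prefix_of_prefix_append {v q x : List ℕ} (h : v <+: q ++ x)
    (hl : v.length ≤ q.length) : v <+: q :=
  List.prefix_of_prefix_length_le h (List.prefix_append q x) hl

theorem vEBAux_succ (ε : ℝ) (fuel : ℕ) {t : OTree} (h : ¬ height t ≤ 1) :
    vEBAux ε (fuel+1) t =
      vEBAux ε fuel (trunc (cutLevel ε (height t) - 1) t) ++
        ((levelPaths (cutLevel ε (height t)) t).map fun q =>
          match subtreeAt? t q with
          | some s => (vEBAux ε fuel s).map (q ++ ·)
          | none => []).flatten := by
  rw [vEBAux]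
  simp [h]

theorem block_eq (ε : ℝ) (fuel : ℕ) {t s : OTree} {q : List ℕ}
    (hs : subtreeAt? t q = some s) :
    (match subtreeAt? t q with
      | some s => (vEBAux ε fuel s).map (q ++ ·)
      | none => ([] : List (List ℕ))) = (vEBAux ε fuel s).map (q ++ ·) := by
  rw [hs]

theorem vEB_mem {ε : ℝ} (hε1 : ε ≤ 1/2) (fuel : ℕ) :
    ∀ {t : OTree} {p : List ℕ}, Uniform t → height t ≤ fuel → p ∈ vEBAux ε fuel t →
    (∃ s, subtreeAt? t p = some s) ∧ p.length + 1 ≤ height t := by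
  induction fuel with
  | zero =>
    intro t p ht hf hp
    simp [vEBAux] at hp
  | succ fuel ih =>
    intro t p ht hf hp
    by_cases hle : height t ≤ 1
    · rw [vEBAux, if_pos hle] at hp
      simp only [List.mem_singleton] at hp
      subst hp
      exact ⟨⟨t, rfl⟩, by have := height_pos t; simp; omega⟩
    · rw [vEBAux_succ ε fuel hle] at hp
      set m := cutLevel ε (height t) with hm
      have h2 : 2 ≤ height t := by omega
      obtain ⟨hm1, hm2⟩ := cutLevel_bounds hε1 h2
      have htru : Uniform (trunc (m-1) t) := uniform_trunc ht (by omega)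
      have htrh : height (trunc (m-1) t) = m := by
        have := height_trunc ht (k := m-1) (by omega); omega
      rcases List.mem_append.1 hp with hp | hp
      · rcases ih htru (by omega) hp with ⟨⟨s', hs'⟩, hlen⟩
        rw [htrh] at hlen
        rw [subtreeAt?_trunc t (by omega)] at hs'
        rcases Option.map_eq_some_iff.1 hs' with ⟨s, hs, _⟩
        exact ⟨⟨s, hs⟩, by omega⟩
      · rcases List.mem_flatten.1 hp with ⟨B, hB, hpB⟩
        rcases List.mem_map.1 hB with ⟨q, hq, rfl⟩
        rcases lp_mem hq with ⟨hqlen, s, hs⟩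
        rw [block_eq ε fuel hs] at hpB
        rcases List.mem_map.1 hpB with ⟨p', hp', rfl⟩
        rcases uniform_subtree ht hs with ⟨hsu, hsh⟩
        rcases ih hsu (by omega) hp' with ⟨⟨s'', hs''⟩, hlen⟩
        refine ⟨⟨s'', ?_⟩, ?_⟩
        · rw [subtreeAt?_append, hs, Option.bind_some]; exact hs''
        · simp only [List.length_append, hqlen]; omega

theorem vEB_head {ε : ℝ} (hε1 : ε ≤ 1/2) (fuel : ℕ) :
    ∀ {t : OTree}, Uniform t → height t ≤ fuel → (vEBAux ε fuel t).head? = some [] := by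
  induction fuel with
  | zero => intro t ht hf; have := height_pos t; omega
  | succ fuel ih =>
    intro t ht hf
    by_cases hle : height t ≤ 1
    · rw [vEBAux, if_pos hle]; rfl
    · rw [vEBAux_succ ε fuel hle]
      set m := cutLevel ε (height t) with hm
      have h2 : 2 ≤ height t := by omega
      obtain ⟨hm1, hm2⟩ := cutLevel_bounds hε1 h2
      have htru : Uniform (trunc (m-1) t) := uniform_trunc ht (by omega)
      have htrh : height (trunc (m-1) t) = m := by
        have := height_trunc ht (k := m-1) (by omega); omega
      rw [List.head?_append, ih htru (by omega)]
      rfl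

theorem vEB_ne_nil {ε : ℝ} (hε1 : ε ≤ 1/2) (fuel : ℕ) {t : OTree}
    (ht : Uniform t) (hf : height t ≤ fuel) : vEBAux ε fuel t ≠ [] := by
  intro hnil
  have := vEB_head hε1 fuel ht hf
  rw [hnil] at this
  simp at this

theorem vEB_getLast {ε : ℝ} (hε1 : ε ≤ 1/2) (fuel : ℕ) :
    ∀ {t : OTree}, Uniform t → height t ≤ fuel →
    ∃ q, (vEBAux ε fuel t).getLast? = some q ∧ q.length + 1 = height t ∧ RSpec t [] q := by
  induction fuel with
  | zero => intro t ht hf; have := height_pos t; omega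
  | succ fuel ih =>
    intro t ht hf
    by_cases hle : height t ≤ 1
    · refine ⟨[], by rw [vEBAux, if_pos hle]; rfl, ?_, ?_⟩
      · have := height_pos t; simp; omega
      · intro n _ hn; simp at hn
    · rw [vEBAux_succ ε fuel hle]
      set m := cutLevel ε (height t) with hm
      have h2 : 2 ≤ height t := by omega
      obtain ⟨hm1, hm2⟩ := cutLevel_bounds hε1 h2
      rcases lp_getLast ht (m := m) (by omega) with ⟨qL, hqL, hqLlen, hqLspec⟩
      have hqLmem : qL ∈ levelPaths m t := List.mem_of_getLast? hqL
      rcases lp_mem hqLmem with ⟨_, s, hs⟩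
      rcases uniform_subtree ht hs with ⟨hsu, hsh⟩
      rcases ih hsu (by omega) with ⟨r, hr, hrlen, hrspec⟩
      have hsne : vEBAux ε fuel s ≠ [] := vEB_ne_nil hε1 fuel hsu (by omega)
      have hlastblock : (((levelPaths m t).map fun q =>
          match subtreeAt? t q with
          | some s => (vEBAux ε fuel s).map (q ++ ·)
          | none => []).getLast?) = some ((vEBAux ε fuel s).map (qL ++ ·)) := by
        rw [List.getLast?_map, hqL, Option.map_some, block_eq ε fuel hs]
      have hflat : (((levelPaths m t).map fun q =>
          match subtreeAt? t q with
          | some s => (vEBAux ε fuel s).map (q ++ ·)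
          | none => []).flatten).getLast? = some (qL ++ r) := by
        rw [getLast?_flatten hlastblock (by simpa using hsne)]
        rw [List.getLast?_map, hr]
        rfl
      refine ⟨qL ++ r, ?_, ?_, ?_⟩
      · rw [List.getLast?_append, hflat]; rfl
      · simp only [List.length_append, hqLlen]; omega
      · intro n _ hn s₂ hs₂
        simp only [List.length_append, hqLlen] at hn
        rcases Nat.lt_or_ge n m with hnm | hnm
        · rw [List.take_append_of_le_length (by omega)] at hs₂
          have := hqLspec n (by simp) (by omega) s₂ hs₂
          rcases this with ⟨j, hj1, hj2⟩
          exact ⟨j, by rw [List.getElem?_append_left (by omega)]; exact hj1, hj2⟩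
        · obtain ⟨n', rfl⟩ : ∃ n', n = qL.length + n' := ⟨n - m, by omega⟩
          rw [List.take_length_add_append, subtreeAt?_append, hs, Option.bind_some] at hs₂
          have := hrspec n' (by simp) (by omega) s₂ hs₂
          rcases this with ⟨j, hj1, hj2⟩
          refine ⟨j, ?_, hj2⟩
          rw [List.getElem?_append_right (by omega)]
          simpa using hj1

theorem vEB_nodup {ε : ℝ} (hε1 : ε ≤ 1/2) (fuel : ℕ) :
    ∀ {t : OTree}, Uniform t → height t ≤ fuel → (vEBAux ε fuel t).Nodup := by
  induction fuel with
  | zero => intro t ht hf; simp [vEBAux]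
  | succ fuel ih =>
    intro t ht hf
    by_cases hle : height t ≤ 1
    · rw [vEBAux, if_pos hle]; simp
    · rw [vEBAux_succ ε fuel hle]
      set m := cutLevel ε (height t) with hm
      have h2 : 2 ≤ height t := by omega
      obtain ⟨hm1, hm2⟩ := cutLevel_bounds hε1 h2
      have htru : Uniform (trunc (m-1) t) := uniform_trunc ht (by omega)
      have htrh : height (trunc (m-1) t) = m := by
        have := height_trunc ht (k := m-1) (by omega); omega
      rw [List.nodup_append]
      refine ⟨ih htru (by omega), ?_, ?_⟩
      · rw [List.nodup_flatten]
        constructor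
        · intro B hB
          rcases List.mem_map.1 hB with ⟨q, hq, rfl⟩
          rcases lp_mem hq with ⟨hqlen, s, hs⟩
          rw [block_eq ε fuel hs]
          rcases uniform_subtree ht hs with ⟨hsu, hsh⟩
          exact (List.nodup_map_iff (fun x y hxy => List.append_cancel_left hxy)).2
            (ih hsu (by omega))
        · rw [List.pairwise_map]
          refine List.Pairwise.imp_of_mem ?_ (lp_nodup m t)
          intro q q' hq hq' hne p hp hp'
          rcases lp_mem hq with ⟨hqlen, s, hs⟩
          rcases lp_mem hq' with ⟨hq'len, s', hs'⟩
          rw [block_eq ε fuel hs] at hp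
          rw [block_eq ε fuel hs'] at hp'
          rcases List.mem_map.1 hp with ⟨x, _, rfl⟩
          rcases List.mem_map.1 hp' with ⟨y, _, heq⟩
          exact hne (List.append_inj_left heq.symm (by omega))
      · intro p hp _ hp' rfl
        have hlen1 : p.length + 1 ≤ m := by
          have := vEB_mem hε1 fuel htru (by omega) hp
          rw [htrh] at this
          exact this.2
        rcases List.mem_flatten.1 hp' with ⟨B, hB, hpB⟩
        rcases List.mem_map.1 hB with ⟨q, hq, rfl⟩
        rcases lp_mem hq with ⟨hqlen, s, hs⟩
        rw [block_eq ε fuel hs] at hpB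
        rcases List.mem_map.1 hpB with ⟨x, _, heq⟩
        have : p.length = q.length + x.length := by rw [← heq]; simp
        omega

theorem trunc_children_length {j : ℕ} (hj : 1 ≤ j) (s : OTree) :
    ((trunc j s).children).length = s.children.length := by
  cases j with
  | zero => omega
  | succ j => cases s with | node cs => simp [trunc]

theorem block_head {ε : ℝ} (hε1 : ε ≤ 1/2) (fuel : ℕ) {s : OTree} {q : List ℕ}
    (hsu : Uniform s) (hsh : height s ≤ fuel) :
    ((vEBAux ε fuel s).map (q ++ ·)).head? = some q := by
  rw [List.head?_map, vEB_head hε1 fuel hsu hsh]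
  simp

theorem vEB_adj_left {ε : ℝ} (hε1 : ε ≤ 1/2) (fuel : ℕ) :
    ∀ {t : OTree} {v a b : List ℕ}, Uniform t → height t ≤ fuel →
    Adj (vEBAux ε fuel t) a b → v <+: b → ¬ v <+: a →
    ∃ k, b = v ++ List.replicate k 0 := by
  induction fuel with
  | zero => intro t v a b ht hf _ _ _; have := height_pos t; omega
  | succ fuel ih =>
    intro t v a b ht hf hadj hpre hnpre
    by_cases hle : height t ≤ 1
    · rw [vEBAux, if_pos hle] at hadj
      exact absurd hadj Adj_singleton
    · rw [vEBAux_succ ε fuel hle] at hadj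
      set m := cutLevel ε (height t) with hm
      have h2 : 2 ≤ height t := by omega
      obtain ⟨hm1, hm2⟩ := cutLevel_bounds hε1 h2
      have htru : Uniform (trunc (m-1) t) := uniform_trunc ht (by omega)
      have htrh : height (trunc (m-1) t) = m := by
        have := height_trunc ht (k := m-1) (by omega); omega
      have hblocksne : ∀ B ∈ (levelPaths m t).map (fun q => match subtreeAt? t q with
          | some s => (vEBAux ε fuel s).map (q ++ ·) | none => []), B ≠ [] := by
        intro B hB
        rcases List.mem_map.1 hB with ⟨q, hq, rfl⟩
        rcases lp_mem hq with ⟨hqlen, s, hs⟩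
        rcases uniform_subtree ht hs with ⟨hsu, hsh⟩
        rw [block_eq ε fuel hs]
        simpa using vEB_ne_nil hε1 fuel hsu (by omega)
      rcases Adj_append hadj with htop | hflat | ⟨hlast, hhead⟩
      · exact ih htru (by omega) htop hpre hnpre
      · rcases Adj_flatten hblocksne hflat with ⟨B, hB, hadjB⟩ | ⟨B, C, hBC, hlastB, hheadC⟩
        · rcases List.mem_map.1 hB with ⟨q, hq, rfl⟩
          rcases lp_mem hq with ⟨hqlen, s, hs⟩
          rcases uniform_subtree ht hs with ⟨hsu, hsh⟩
          rw [block_eq ε fuel hs] at hadjB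
          rcases Adj_map hadjB with ⟨a', b', hab, rfl, rfl⟩
          rcases le_or_gt v.length q.length with hvq | hvq
          · exact absurd ((prefix_of_prefix_append hpre hvq).trans
              (List.prefix_append q a')) hnpre
          · have hqv : q <+: v := List.prefix_of_prefix_length_le
              (List.prefix_append q b') hpre (by omega)
            rcases hqv with ⟨v', rfl⟩
            have hpre' : v' <+: b' := (List.prefix_append_right_inj q).1 hpre
            have hnpre' : ¬ v' <+: a' := fun hc => hnpre ((List.prefix_append_right_inj q).2 hc)
            rcases ih hsu (by omega) hab hpre' hnpre' with ⟨k, hk⟩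
            exact ⟨k, by rw [hk, List.append_assoc]⟩
        · rcases Adj_map hBC with ⟨q, q', hadjlp, rfl, rfl⟩
          have hqmem : q ∈ levelPaths m t := by
            rcases hadjlp with ⟨j, h1, _⟩; exact List.mem_of_getElem? h1
          have hq'mem : q' ∈ levelPaths m t := by
            rcases hadjlp with ⟨j, _, h2⟩; exact List.mem_of_getElem? h2
          rcases lp_mem hqmem with ⟨hqlen, s, hs⟩
          rcases lp_mem hq'mem with ⟨hq'len, s', hs'⟩
          rcases uniform_subtree ht hs with ⟨hsu, hsh⟩
          rcases uniform_subtree ht hs' with ⟨hs'u, hs'h⟩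
          rw [block_eq ε fuel hs'] at hheadC
          rw [block_head hε1 fuel hs'u (by omega)] at hheadC
          have hb : b = q' := by simpa using hheadC.symm
          subst hb
          rw [block_eq ε fuel hs] at hlastB
          rw [List.getLast?_map] at hlastB
          rcases Option.map_eq_some_iff.1 hlastB with ⟨a'', _, ha''⟩
          have hnpreq : ¬ v <+: q := fun hc =>
            hnpre (by rw [← ha'']; exact hc.trans (List.prefix_append q a''))
          exact lp_adj_left ht (by omega) hadjlp hpre hnpreq
      · -- top/bottom boundary : b is the head of the flatten part
        rcases lp_head ht (m := m) (by omega) with hlph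
        rcases hlps : levelPaths m t with _ | ⟨q0, rest⟩
        · rw [hlps] at hlph; simp at hlph
        · rw [hlps] at hlph
          have hq0 : q0 = List.replicate m 0 := by simpa using hlph
          have hq0mem : q0 ∈ levelPaths m t := by rw [hlps]; simp
          rcases lp_mem hq0mem with ⟨hq0len, s, hs⟩
          rcases uniform_subtree ht hs with ⟨hsu, hsh⟩
          rw [hlps, List.map_cons, List.flatten_cons, List.head?_append,
            block_eq ε fuel hs, block_head hε1 fuel hsu (by omega)] at hhead
          have hb : b = q0 := by simpa using hhead.symm
          subst hb
          rw [hq0] at hpre ⊢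
          rcases prefix_replicate hpre with ⟨k, hk⟩
          exact ⟨k, hk⟩

theorem vEB_adj_right {ε : ℝ} (hε1 : ε ≤ 1/2) (fuel : ℕ) :
    ∀ {t : OTree} {v a b : List ℕ}, Uniform t → height t ≤ fuel →
    Adj (vEBAux ε fuel t) a b → v <+: a → ¬ v <+: b →
    RSpec t v a := by
  induction fuel with
  | zero => intro t v a b ht hf _ _ _; have := height_pos t; omega
  | succ fuel ih =>
    intro t v a b ht hf hadj hpre hnpre
    by_cases hle : height t ≤ 1
    · rw [vEBAux, if_pos hle] at hadj
      exact absurd hadj Adj_singleton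
    · rw [vEBAux_succ ε fuel hle] at hadj
      set m := cutLevel ε (height t) with hm
      have h2 : 2 ≤ height t := by omega
      obtain ⟨hm1, hm2⟩ := cutLevel_bounds hε1 h2
      have htru : Uniform (trunc (m-1) t) := uniform_trunc ht (by omega)
      have htrh : height (trunc (m-1) t) = m := by
        have := height_trunc ht (k := m-1) (by omega); omega
      have hblocksne : ∀ B ∈ (levelPaths m t).map (fun q => match subtreeAt? t q with
          | some s => (vEBAux ε fuel s).map (q ++ ·) | none => []), B ≠ [] := by
        intro B hB
        rcases List.mem_map.1 hB with ⟨q, hq, rfl⟩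
        rcases lp_mem hq with ⟨hqlen, s, hs⟩
        rcases uniform_subtree ht hs with ⟨hsu, hsh⟩
        rw [block_eq ε fuel hs]
        simpa using vEB_ne_nil hε1 fuel hsu (by omega)
      -- transfer of `RSpec` from the truncation to `t`
      have htransfer : ∀ a : List ℕ, a.length + 1 ≤ m →
          RSpec (trunc (m-1) t) v a → RSpec t v a := by
        intro a halen hspec n hvn hna s₂ hs₂
        have htl : (a.take n).length = n := by
          rw [List.length_take]; omega
        have hsub : subtreeAt? (trunc (m-1) t) (a.take n) = some (trunc (m-1-n) s₂) := by
          rw [subtreeAt?_trunc t (by omega), hs₂, Option.map_some, htl]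
        rcases hspec n hvn hna _ hsub with ⟨j, hj1, hj2⟩
        refine ⟨j, hj1, ?_⟩
        rwa [trunc_children_length (by omega) s₂] at hj2
      rcases Adj_append hadj with htop | hflat | ⟨hlast, hhead⟩
      · have hamem : a ∈ vEBAux ε fuel (trunc (m-1) t) := by
          rcases htop with ⟨j, h1, _⟩; exact List.mem_of_getElem? h1
        have halen : a.length + 1 ≤ m := by
          have := vEB_mem hε1 fuel htru (by omega) hamem
          rw [htrh] at this; exact this.2
        exact htransfer a halen (ih htru (by omega) htop hpre hnpre)
      · rcases Adj_flatten hblocksne hflat with ⟨B, hB, hadjB⟩ | ⟨B, C, hBC, hlastB, hheadC⟩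
        · rcases List.mem_map.1 hB with ⟨q, hq, rfl⟩
          rcases lp_mem hq with ⟨hqlen, s, hs⟩
          rcases uniform_subtree ht hs with ⟨hsu, hsh⟩
          rw [block_eq ε fuel hs] at hadjB
          rcases Adj_map hadjB with ⟨a', b', hab, rfl, rfl⟩
          rcases le_or_gt v.length q.length with hvq | hvq
          · exact absurd ((prefix_of_prefix_append hpre hvq).trans
              (List.prefix_append q b')) hnpre
          · have hqv : q <+: v := List.prefix_of_prefix_length_le
              (List.prefix_append q a') hpre (by omega)
            rcases hqv with ⟨v', rfl⟩
            have hpre' : v' <+: a' := (List.prefix_append_right_inj q).1 hpre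
            have hnpre' : ¬ v' <+: b' := fun hc => hnpre ((List.prefix_append_right_inj q).2 hc)
            have hspec := ih hsu (by omega) hab hpre' hnpre'
            intro n hvn hna s₂ hs₂
            simp only [List.length_append] at hvn hna
            obtain ⟨n', rfl⟩ : ∃ n', n = q.length + n' := ⟨n - q.length, by omega⟩
            rw [List.take_length_add_append, subtreeAt?_append, hs, Option.bind_some] at hs₂
            rcases hspec n' (by omega) (by omega) s₂ hs₂ with ⟨j, hj1, hj2⟩
            refine ⟨j, ?_, hj2⟩
            rw [List.getElem?_append_right (by omega)]
            simpa using hj1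
        · rcases Adj_map hBC with ⟨q, q', hadjlp, rfl, rfl⟩
          have hqmem : q ∈ levelPaths m t := by
            rcases hadjlp with ⟨j, h1, _⟩; exact List.mem_of_getElem? h1
          have hq'mem : q' ∈ levelPaths m t := by
            rcases hadjlp with ⟨j, _, h2⟩; exact List.mem_of_getElem? h2
          rcases lp_mem hqmem with ⟨hqlen, s, hs⟩
          rcases lp_mem hq'mem with ⟨hq'len, s', hs'⟩
          rcases uniform_subtree ht hs with ⟨hsu, hsh⟩
          rcases uniform_subtree ht hs' with ⟨hs'u, hs'h⟩
          rw [block_eq ε fuel hs'] at hheadC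
          rw [block_head hε1 fuel hs'u (by omega)] at hheadC
          have hb : b = q' := by simpa using hheadC.symm
          subst hb
          rw [block_eq ε fuel hs] at hlastB
          rcases vEB_getLast hε1 fuel hsu (by omega) with ⟨r, hr, hrlen, hrspec⟩
          rw [List.getLast?_map, hr] at hlastB
          have ha : a = q ++ r := by simpa using hlastB.symm
          subst ha
          intro n hvn hna s₂ hs₂
          simp only [List.length_append, hqlen] at hna
          rcases Nat.lt_or_ge n m with hnm | hnm
          · have hvq : v <+: q := prefix_of_prefix_append hpre (by omega)
            rw [List.take_append_of_le_length (by omega)] at hs₂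
            rcases lp_adj_right ht (by omega) hadjlp hvq hnpre n hvn hnm s₂ hs₂
              with ⟨j, hj1, hj2⟩
            exact ⟨j, by rw [List.getElem?_append_left (by omega)]; exact hj1, hj2⟩
          · obtain ⟨n', rfl⟩ : ∃ n', n = q.length + n' := ⟨n - q.length, by omega⟩
            rw [List.take_length_add_append, subtreeAt?_append, hs, Option.bind_some] at hs₂
            rcases hrspec n' (by simp) (by omega) s₂ hs₂ with ⟨j, hj1, hj2⟩
            refine ⟨j, ?_, hj2⟩
            rw [List.getElem?_append_right (by omega)]
            simpa using hj1
      · -- a is the last vertex of the top tree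
        rcases vEB_getLast hε1 fuel htru (by omega) with ⟨q₀, hq₀, hq₀len, hq₀spec⟩
        rw [hq₀] at hlast
        have ha : a = q₀ := by simpa using hlast.symm
        subst ha
        rw [htrh] at hq₀len
        have hspec0 : RSpec (trunc (m-1) t) v a := by
          intro n hvn hna s₂ hs₂
          exact hq₀spec n (by simp) hna s₂ hs₂
        exact htransfer a (by omega) hspec0

theorem indexOf_eq_of_getElem? {α : Type*} [BEq α] [LawfulBEq α] {L : List α} {p : α} {k : ℕ}
    (hnd : L.Nodup) (hk : L[k]? = some p) : L.idxOf p = k := by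
  induction L generalizing k with
  | nil => simp at hk
  | cons x L' ih =>
    rcases List.nodup_cons.1 hnd with ⟨hx, hnd'⟩
    cases k with
    | zero =>
      have : x = p := by simpa using hk
      subst this
      simp [List.idxOf_cons]
    | succ k' =>
      have hk' : L'[k']? = some p := by simpa using hk
      have hpx : x ≠ p := by
        rintro rfl
        exact hx (List.mem_of_getElem? hk')
      rw [List.idxOf_cons]
      have hbeq : (x == p) = false := by simpa using hpx
      rw [hbeq]
      simp [ih hnd' hk']



/-- Write the subtree `S` of all descendants of a vertex `v` as the
disjoint union of its maximal memory intervals. For each such maximal memory interval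
`I`, its first vertex in `vEB_ε(T)` lies on the leftmost branch of `S` and its last
vertex lies on the rightmost branch of `S`. -/
theorem maximal_interval_endpoints_on_extreme_branches
    (ε : ℝ) (hε0 : 0 < ε) (hε1 : ε ≤ 1/2) (t : OTree) (ht : Uniform t)
    (v : List ℕ) (hv : IsVertex t v)
    (I : Set (List ℕ)) (hI : MemInterval ε t I) (hIne : I.Nonempty)
    (hIS : I ⊆ {w | IsVertex t w ∧ v <+: w})
    (hImax : ∀ J, MemInterval ε t J → I ⊆ J →
      J ⊆ {w | IsVertex t w ∧ v <+: w} → J = I) :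
    (∀ w ∈ I, (∀ u ∈ I, pos ε t w ≤ pos ε t u) → OnLeftmostBranch v w) ∧
    (∀ w ∈ I, (∀ u ∈ I, pos ε t u ≤ pos ε t w) → OnRightmostBranch t v w) := by
  classical
  set L := vEB ε t with hL
  have hnd : L.Nodup := vEB_nodup hε1 (height t) ht le_rfl
  rcases hI with ⟨i, n, hIdef⟩
  set M : List (List ℕ) := (L.drop i).take n with hM
  have hMlen : M.length = min n (L.length - i) := by
    rw [hM, List.length_take, List.length_drop]
  have hMj : ∀ j, j < M.length → M[j]? = L[i + j]? := by
    intro j hj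
    rw [hM, List.getElem?_take, if_pos (by omega), List.getElem?_drop]
  have hMne : M ≠ [] := by
    rcases hIne with ⟨p0, hp0⟩
    rw [hIdef] at hp0
    intro hc; rw [hc] at hp0; simp at hp0
  have hMpos : 0 < M.length := List.length_pos_iff.2 hMne
  have hmemI : ∀ p, p ∈ I ↔ p ∈ M := by
    intro p; rw [hIdef]; rfl
  have hmaxarg : ∀ (u : List ℕ) (ku : ℕ), L[ku]? = some u →
      (∀ j, j < M.length → i + j ≠ ku) →
      ∀ (K : List (List ℕ)), MemInterval ε t {p | p ∈ K} →
      (∀ p, p ∈ K ↔ p = u ∨ p ∈ M) → ¬ v <+: u := by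
    intro u ku hku hkuM K hKmi hKM hvu
    have hJI : {p | p ∈ K} ⊆ {w | IsVertex t w ∧ v <+: w} := by
      intro p hp
      rcases (hKM p).1 hp with rfl | hpM
      · refine ⟨?_, hvu⟩
        rcases vEB_mem hε1 (height t) ht le_rfl (List.mem_of_getElem? hku) with ⟨⟨s, hs⟩, _⟩
        simp [IsVertex, hs]
      · exact hIS ((hmemI p).2 hpM)
    have hJeq := hImax _ hKmi (fun p hp => (hKM p).2 (Or.inr ((hmemI p).1 hp))) hJI
    have huI : u ∈ I := by
      rw [← hJeq]
      exact (hKM u).2 (Or.inl rfl)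
    rw [hmemI] at huI
    rcases List.getElem_of_mem huI with ⟨j, hj, hMju⟩
    have hMj' : M[j]? = some u := by rw [List.getElem?_eq_getElem hj, hMju]
    have hLju : L[i + j]? = some u := (hMj j hj).symm.trans hMj'
    have hlt : i + j < L.length := by
      by_contra hc
      rw [List.getElem?_eq_none (by omega)] at hLju
      simp at hLju
    exact hkuM j hj ((List.getElem?_inj hlt hnd).1 (hLju.trans hku.symm))
  constructor
  · -- leftmost
    intro w hw hmin
    rw [hmemI] at hw
    rcases List.getElem_of_mem hw with ⟨j, hj, hMjw⟩
    have hMjw' : M[j]? = some w := by rw [List.getElem?_eq_getElem hj, hMjw]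
    have hLw : L[i + j]? = some w := (hMj j hj).symm.trans hMjw'
    have hposw : pos ε t w = i + j := indexOf_eq_of_getElem? hnd hLw
    obtain ⟨p0, hp0⟩ : ∃ p0, M[0]? = some p0 := by
      rcases List.exists_cons_of_ne_nil hMne with ⟨p0, M', hM'⟩
      exact ⟨p0, by rw [hM']; simp⟩
    have hLp0 : L[i]? = some p0 := by
      have := (hMj 0 hMpos).symm.trans hp0
      simpa using this
    have hposp0 : pos ε t p0 = i := indexOf_eq_of_getElem? hnd hLp0
    have hp0I : p0 ∈ I := (hmemI p0).2 (List.mem_of_getElem? hp0)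
    have hj0 : j = 0 := by
      have := hmin p0 hp0I
      omega
    subst hj0
    rw [Nat.add_zero] at hLw
    have hwp0 : w = p0 := by
      rw [hLw] at hLp0
      simpa using hLp0
    have hvw : v <+: w := (hIS ((hmemI w).2 hw)).2
    cases i with
    | zero =>
      have hhead : L[0]? = some [] := by
        rw [← List.head?_eq_getElem?]
        exact vEB_head hε1 (height t) ht le_rfl
      have hwnil : w = [] := by
        rw [hLw] at hhead
        simpa using hhead.symm
      subst hwnil
      have hvnil : v = [] := List.prefix_nil.1 hvw
      subst hvnil
      exact ⟨List.prefix_rfl, fun nn hnn _ => by simp at hnn⟩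
    | succ i' =>
      have hilt : i' + 1 < L.length := by
        by_contra hc
        rw [List.getElem?_eq_none (by omega)] at hLw
        simp at hLw
      obtain ⟨u, hu⟩ : ∃ u, L[i']? = some u :=
        ⟨L[i']'(by omega), List.getElem?_eq_getElem (by omega)⟩
      have hadj : Adj L u w := ⟨i', hu, hLw⟩
      have hdropc : L.drop i' = u :: L.drop (i' + 1) := by
        rw [List.drop_eq_getElem_cons (by omega : i' < L.length)]
        have h' := List.getElem?_eq_getElem (l := L) (by omega : i' < L.length)
        rw [hu] at h'
        rw [show L[i'] = u by simpa using h'.symm]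
      have hKlist : (L.drop i').take (n + 1) = u :: M := by
        rw [hdropc, List.take_succ_cons, hM]
      have hnvu : ¬ v <+: u := by
        refine hmaxarg u i' hu (fun j' hj' => by omega) ((L.drop i').take (n+1))
          ⟨i', n+1, rfl⟩ ?_
        intro p
        rw [hKlist]
        simp
      rcases vEB_adj_left hε1 (height t) ht le_rfl hadj hvw hnvu with ⟨k, hk⟩
      refine ⟨hvw, ?_⟩
      intro nn hnn hvnn
      rw [show w.get ⟨nn, hnn⟩ = w[nn] from rfl]
      subst hk
      rw [List.getElem_append_right hvnn, List.getElem_replicate]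
  · -- rightmost
    intro w hw hmax
    rw [hmemI] at hw
    rcases List.getElem_of_mem hw with ⟨j, hj, hMjw⟩
    have hMjw' : M[j]? = some w := by rw [List.getElem?_eq_getElem hj, hMjw]
    have hLw : L[i + j]? = some w := (hMj j hj).symm.trans hMjw'
    have hposw : pos ε t w = i + j := indexOf_eq_of_getElem? hnd hLw
    set jl := M.length - 1 with hjl
    obtain ⟨pl, hpl⟩ : ∃ pl, M[jl]? = some pl :=
      ⟨M[jl]'(by omega), List.getElem?_eq_getElem (by omega)⟩
    have hLpl : L[i + jl]? = some pl := (hMj jl (by omega)).symm.trans hpl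
    have hpospl : pos ε t pl = i + jl := indexOf_eq_of_getElem? hnd hLpl
    have hplI : pl ∈ I := (hmemI pl).2 (List.mem_of_getElem? hpl)
    have hjjl : j = jl := by
      have := hmax pl hplI
      omega
    subst hjjl
    have hvw : v <+: w := (hIS ((hmemI w).2 hw)).2
    have hiltL : i + jl < L.length := by
      by_contra hc
      rw [List.getElem?_eq_none (by omega)] at hLw
      simp at hLw
    rcases Nat.lt_or_ge (i + M.length) L.length with hcase | hcase
    · -- w has a successor in L, which lies outside I
      have hMn : M.length = n := by omega
      obtain ⟨u, hu⟩ : ∃ u, L[i + n]? = some u :=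
        ⟨L[i + n]'(by omega), List.getElem?_eq_getElem (by omega)⟩
      have hadj : Adj L w u := by
        refine ⟨i + jl, hLw, ?_⟩
        rw [show i + jl + 1 = i + n by omega]
        exact hu
      have hKlist : (L.drop i).take (n + 1) = M ++ [u] := by
        rw [List.take_succ, hM]
        congr 1
        rw [List.getElem?_drop, hu]
        rfl
      have hnvu : ¬ v <+: u := by
        refine hmaxarg u (i + n) hu (fun j' hj' => by omega) ((L.drop i).take (n+1))
          ⟨i, n+1, rfl⟩ ?_
        intro p
        rw [hKlist]
        simp [or_comm]
      have hspec := vEB_adj_right hε1 (height t) ht le_rfl hadj hvw hnvu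
      refine ⟨hvw, ?_⟩
      intro nn hnn hvnn s hs
      rcases hspec nn hvnn hnn s hs with ⟨jj, hjj1, hjj2⟩
      have h' := List.getElem?_eq_getElem hnn
      rw [hjj1] at h'
      have hg : w[nn] = jj := by simpa using h'.symm
      rw [show w.get ⟨nn, hnn⟩ = w[nn] from rfl, hg]
      exact hjj2
    · -- w is the last element of L
      rcases vEB_getLast hε1 (height t) ht le_rfl with ⟨q, hq, hqlen, hqspec⟩
      have hq' : L.getLast? = some q := hq
      have hMl : i + jl = L.length - 1 := by omega
      have hwq : w = q := by
        rw [List.getLast?_eq_getElem?, ← hMl, hLw] at hq'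
        simpa using hq'
      subst hwq
      refine ⟨hvw, ?_⟩
      intro nn hnn hvnn s hs
      rcases hqspec nn (by simp) hnn s hs with ⟨jj, hjj1, hjj2⟩
      have h' := List.getElem?_eq_getElem hnn
      rw [hjj1] at h'
      have hg : w[nn] = jj := by simpa using h'.symm
      rw [show w.get ⟨nn, hnn⟩ = w[nn] from rfl, hg]
      exact hjj2

end VEB
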